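/- Let G be a connected simple graph on a finite vertex set V with |V| = n ≥ 2, m edges, and diameter D. Then the second smallest eigenvalue (counted with multiplicity) of the graph Laplacian matrix L(G) satisfies λ₂(L(G)) ≤ 2m / D². -/

import Mathlib

open Matrix Finset

/-- The list of eigenvalues (counted with multiplicity) of a Hermitian real matrix, sorted
in nondecreasing order. -/
noncomputable def sortedEigenvalues {n : Type*} [Fintype n] [DecidableEq n]
    {A : Matrix n n ℝ} (hA : A.IsHermitian) : List ℝ :=
  Multiset.sort (Finset.univ.val.map hA.eigenvalues) (· ≤ ·)

lemma sorted_getD_one_le {l : List ℝ} (hs : l.Pairwise (· ≤ ·)) {x : ℝ}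
    (h : 2 ≤ Multiset.countP (· ≤ x) (l : Multiset ℝ)) : l.getD 1 0 ≤ x := by
  match l, hs with
  | [], _ => simp at h
  | [a], _ =>
    have := Multiset.countP_le_card (· ≤ x) (([a] : List ℝ) : Multiset ℝ)
    rw [Multiset.coe_card, List.length_singleton] at this; omega
  | a :: b :: t, hs =>
    by_contra hx
    push_neg at hx
    simp only [List.getD, List.getElem?_cons_succ, List.getElem?_cons_zero,
      Option.getD_some] at hx
    have hbt : ∀ y ∈ b :: t, ¬ (y ≤ x) := by
      intro y hy
      rcases List.mem_cons.mp hy with rfl | hy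
      · exact fun hle => absurd (hle.trans_lt hx) (lt_irrefl _)
      · have hby : b ≤ y := List.rel_of_pairwise_cons hs.of_cons hy
        exact fun hle => absurd ((hby.trans hle).trans_lt hx) (lt_irrefl _)
    have h0 : Multiset.countP (· ≤ x) ((b :: t : List ℝ) : Multiset ℝ) = 0 :=
      Multiset.countP_eq_zero.mpr hbt
    have : Multiset.countP (· ≤ x) ((a :: b :: t : List ℝ) : Multiset ℝ) ≤ 1 := by
      rw [show ((a :: b :: t : List ℝ) : Multiset ℝ)
          = a ::ₘ ((b :: t : List ℝ) : Multiset ℝ) from rfl,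
        Multiset.countP_cons, h0]
      split <;> omega
    omega

section spectral

variable {n : Type*} [Fintype n] [DecidableEq n] {A : Matrix n n ℝ} (hA : A.IsHermitian)

lemma inner_coords' {m : Type*} [Fintype m] (x y : EuclideanSpace ℝ m) :
    (inner ℝ x y : ℝ) = ∑ i, x i * y i := by
  simp [PiLp.inner_apply]
  exact Finset.sum_congr rfl fun i _ => mul_comm _ _

lemma repr_eq_dot (f : n → ℝ) (i : n) :
    hA.eigenvectorBasis.repr ((WithLp.equiv 2 (n → ℝ)).symm f) i
      = ⇑(hA.eigenvectorBasis i) ⬝ᵥ f := by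
  rw [OrthonormalBasis.repr_apply_apply, inner_coords']
  simp [dotProduct, WithLp.equiv_symm_apply]

lemma dot_self_eq_sum (f : n → ℝ) :
    f ⬝ᵥ f = ∑ i, (⇑(hA.eigenvectorBasis i) ⬝ᵥ f)^2 := by
  have h1 : f ⬝ᵥ f
      = (inner ℝ ((WithLp.equiv 2 (n → ℝ)).symm f) ((WithLp.equiv 2 (n → ℝ)).symm f) : ℝ) := by
    rw [inner_coords']; simp [dotProduct, WithLp.equiv_symm_apply]
  rw [h1, ← hA.eigenvectorBasis.repr.inner_map_map, inner_coords']
  simp only [repr_eq_dot, sq]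

lemma dot_mulVec_eq_sum (f : n → ℝ) :
    f ⬝ᵥ (A *ᵥ f) = ∑ i, hA.eigenvalues i * (⇑(hA.eigenvectorBasis i) ⬝ᵥ f)^2 := by
  have hsymm : Aᵀ = A := by
    have := hA
    rwa [Matrix.IsHermitian, Matrix.conjTranspose_eq_transpose_of_trivial] at this
  have key : ∀ (v w : n → ℝ), v ⬝ᵥ (A *ᵥ w) = (A *ᵥ v) ⬝ᵥ w := by
    intro v w
    rw [Matrix.dotProduct_mulVec, ← hsymm, Matrix.vecMul_transpose, hsymm]
  have h1 : f ⬝ᵥ (A *ᵥ f)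
      = (inner ℝ ((WithLp.equiv 2 (n → ℝ)).symm f)
          ((WithLp.equiv 2 (n → ℝ)).symm (A *ᵥ f)) : ℝ) := by
    simp [inner_coords', dotProduct, WithLp.equiv_symm_apply]
  rw [h1, ← hA.eigenvectorBasis.repr.inner_map_map, inner_coords']
  refine Finset.sum_congr rfl fun i _ => ?_
  rw [repr_eq_dot, repr_eq_dot, key, hA.mulVec_eigenvectorBasis, smul_dotProduct,
    smul_eq_mul]
  ring

end spectral

/-- For a connected finite simple graph `G` with `n ≥ 2` vertices, `m` edges
and diameter `D`, the second smallest eigenvalue of the Laplacian matrix `L(G)` satisfies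
`λ₂(L(G)) ≤ 2 m / D²`. -/
theorem lambda2_lapMatrix_le {V : Type*} [Fintype V] [DecidableEq V]
    (G : SimpleGraph V) [DecidableRel G.Adj]
    (hconn : G.Connected) (hn : 2 ≤ Fintype.card V)
    (hL : (G.lapMatrix ℝ).IsHermitian) :
    (sortedEigenvalues hL).getD 1 0 ≤
      2 * (G.edgeFinset.card : ℝ) / (G.diam : ℝ) ^ 2 := by
  classical
  have hnt : Nontrivial V := Fintype.one_lt_card_iff_nontrivial.mp hn
  set A : Matrix V V ℝ := G.lapMatrix ℝ with hAdef
  set μ : V → ℝ := hL.eigenvalues with hμdef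
  set b := hL.eigenvectorBasis with hbdef
  have hps : A.PosSemidef := SimpleGraph.posSemidef_lapMatrix ℝ G
  have hμnn : ∀ i, 0 ≤ μ i := fun i => hps.eigenvalues_nonneg i
  -- diameter facts
  have hediam : G.ediam ≠ ⊤ := by
    intro h
    obtain ⟨x, y, hxy⟩ := SimpleGraph.exists_edist_eq_ediam_of_finite (G := G)
    rw [h] at hxy
    exact (SimpleGraph.edist_ne_top_iff_reachable.mpr (hconn.preconnected x y)) hxy
  have hD0 : G.diam ≠ 0 := by
    rw [SimpleGraph.diam, ne_eq, ENat.toNat_eq_zero]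
    push_neg
    exact ⟨SimpleGraph.ediam_ne_zero, hediam⟩
  obtain ⟨u, v, huv⟩ := SimpleGraph.exists_dist_eq_diam (G := G)
  have huvne : u ≠ v := by
    intro h
    rw [h, SimpleGraph.dist_self] at huv
    exact hD0 huv.symm
  -- the test vector
  set g : V → ℝ := fun x => (G.dist u x : ℝ) with hgdef
  set avg : ℝ := (∑ x, g x) / (Fintype.card V) with havgdef
  set f : V → ℝ := fun x => g x - avg with hfdef
  have hcard0 : (Fintype.card V : ℝ) ≠ 0 := by positivity
  have hfsum : ∑ x, f x = 0 := by
    simp only [hfdef]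
    rw [Finset.sum_sub_distrib, Finset.sum_const, Finset.card_univ, nsmul_eq_mul, havgdef]
    field_simp; ring
  -- a zero eigenvalue and its constant eigenvector
  have hdet : A.det = 0 := by
    rw [← Matrix.exists_mulVec_eq_zero_iff]
    refine ⟨fun _ => 1, ?_, G.lapMatrix_mulVec_const_eq_zero⟩
    intro h
    exact one_ne_zero (congrFun h u)
  have hprod : ∏ i, μ i = 0 := by
    have h := hL.det_eq_prod_eigenvalues
    rw [hdet] at h
    exact_mod_cast h.symm
  obtain ⟨i0, -, hi0⟩ := Finset.prod_eq_zero_iff.mp hprod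
  have hker : A *ᵥ ⇑(b i0) = 0 := by
    rw [hbdef, hL.mulVec_eigenvectorBasis, ← hμdef, hi0, zero_smul]
  have hconst : ∀ x, b i0 x = b i0 u := by
    have h := (G.lapMatrix_mulVec_eq_zero_iff_forall_reachable (x := ⇑(b i0))).mp
      (by exact hker)
    exact fun x => h x u (hconn.preconnected x u)
  have hc0 : ⇑(b i0) ⬝ᵥ f = 0 := by
    unfold dotProduct
    calc ∑ j, b i0 j * f j = ∑ j, b i0 u * f j :=
          Finset.sum_congr rfl fun j _ => by rw [hconst j]
      _ = b i0 u * ∑ j, f j := by rw [Finset.mul_sum]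
      _ = 0 := by rw [hfsum, mul_zero]
  -- sorted list facts
  set l := sortedEigenvalues hL with hldef
  set L2 := l.getD 1 0 with hL2def
  have hsort : l.Pairwise (· ≤ ·) := Multiset.pairwise_sort _ _
  have hcoe : (l : Multiset ℝ) = Finset.univ.val.map μ := Multiset.sort_eq _ _
  have hlen : l.length = Fintype.card V := by
    have := congrArg Multiset.card hcoe
    rw [Multiset.coe_card] at this
    simpa using this
  have hlmem : L2 ∈ l := by
    rw [hL2def, List.getD_eq_getElem l 0 (by omega)]
    exact List.getElem_mem _
  have hL2nn : 0 ≤ L2 := by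
    have : L2 ∈ (l : Multiset ℝ) := hlmem
    rw [hcoe, Multiset.mem_map] at this
    obtain ⟨i, -, hi⟩ := this
    rw [← hi]; exact hμnn i
  have hL2le : ∀ i, i ≠ i0 → L2 ≤ μ i := by
    intro i hi
    apply sorted_getD_one_le hsort
    rw [hcoe, Multiset.countP_map]
    have hsub : ({i0, i} : Finset V) ⊆ Finset.univ.filter (fun a => μ a ≤ μ i) := by
      intro a ha
      rcases Finset.mem_insert.mp ha with rfl | ha
      · exact Finset.mem_filter.mpr ⟨Finset.mem_univ _, hi0 ▸ hμnn i⟩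
      · rw [Finset.mem_singleton.mp ha]
        exact Finset.mem_filter.mpr ⟨Finset.mem_univ _, le_refl _⟩
    have h2 : 2 ≤ (Finset.univ.filter (fun a => μ a ≤ μ i)).card := by
      rw [← Finset.card_pair (fun h => hi h.symm)]
      exact Finset.card_le_card hsub
    calc (2 : ℕ) ≤ (Finset.univ.filter (fun a => μ a ≤ μ i)).card := h2
      _ = Multiset.card (Multiset.filter (fun a => μ a ≤ μ i) Finset.univ.val) := rfl
  -- Rayleigh quotient bound
  have hray : L2 * (f ⬝ᵥ f) ≤ f ⬝ᵥ (A *ᵥ f) := by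
    rw [dot_self_eq_sum hL f, dot_mulVec_eq_sum hL f, Finset.mul_sum]
    refine Finset.sum_le_sum fun i _ => ?_
    by_cases h : i = i0
    · subst h
      rw [← hbdef, hc0]
      simp
    · exact mul_le_mul_of_nonneg_right (hL2le i h) (sq_nonneg _)
  -- quadratic form upper bound
  have hQ : f ⬝ᵥ (A *ᵥ f) ≤ (G.edgeFinset.card : ℝ) := by
    have hform := G.lapMatrix_toLinearMap₂' (R := ℝ) f
    rw [Matrix.toLinearMap₂'_apply'] at hform
    rw [hform]
    have hstep : ∀ i j, (if G.Adj i j then (f i - f j)^2 else 0)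
        ≤ (if G.Adj i j then (1:ℝ) else 0) := by
      intro i j
      split_ifs with hadj
      · have h1 : G.dist u i ≤ G.dist u j + 1 := by
          have ht := hconn.dist_triangle (u := u) (v := j) (w := i)
          rwa [SimpleGraph.dist_eq_one_iff_adj.mpr hadj.symm] at ht
        have h2 : G.dist u j ≤ G.dist u i + 1 := by
          have ht := hconn.dist_triangle (u := u) (v := i) (w := j)
          rwa [SimpleGraph.dist_eq_one_iff_adj.mpr hadj] at ht
        have h1' : (G.dist u i : ℝ) ≤ (G.dist u j : ℝ) + 1 := by exact_mod_cast h1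
        have h2' : (G.dist u j : ℝ) ≤ (G.dist u i : ℝ) + 1 := by exact_mod_cast h2
        have he : f i - f j = (G.dist u i : ℝ) - (G.dist u j : ℝ) := by
          simp only [hfdef, hgdef]; ring
        rw [he]
        nlinarith
      · exact le_rfl
    have hmono : (∑ i, ∑ j, if G.Adj i j then (f i - f j)^2 else 0)
        ≤ ∑ i, ∑ j, (if G.Adj i j then (1:ℝ) else 0) :=
      Finset.sum_le_sum fun i _ => Finset.sum_le_sum fun j _ => hstep i j
    have hsum2 : ∑ i, ∑ j, (if G.Adj i j then (1:ℝ) else 0)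
        = 2 * (G.edgeFinset.card : ℝ) := by
      have hdeg : ∀ i : V, ∑ j, (if G.Adj i j then (1:ℝ) else 0) = (G.degree i : ℝ) :=
        fun i => (G.degree_eq_sum_if_adj i).symm
      rw [Finset.sum_congr rfl fun i _ => hdeg i, ← Nat.cast_sum,
        G.sum_degrees_eq_twice_card_edges]
      push_cast
      ring
    rw [hsum2] at hmono
    linarith
  -- norm lower bound
  have hN : ((G.diam : ℝ)^2)/2 ≤ f ⬝ᵥ f := by
    have hfu : f u = -avg := by
      simp [hfdef, hgdef, SimpleGraph.dist_self]
    have hfv : f v = (G.diam : ℝ) - avg := by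
      simp only [hfdef, hgdef, huv]
    have hpair : f u * f u + f v * f v ≤ ∑ x, f x * f x := by
      have hsub := Finset.sum_le_sum_of_subset_of_nonneg
        (Finset.subset_univ ({u, v} : Finset V))
        (fun i _ _ => mul_self_nonneg (f i))
      rwa [Finset.sum_pair huvne] at hsub
    have hdd : f ⬝ᵥ f = ∑ x, f x * f x := rfl
    rw [hfu, hfv] at hpair
    rw [hdd]
    nlinarith [hpair, sq_nonneg (2*avg - (G.diam:ℝ))]
  -- put everything together
  have hchain : L2 * (((G.diam : ℝ)^2)/2) ≤ (G.edgeFinset.card : ℝ) :=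
    le_trans (mul_le_mul_of_nonneg_left hN hL2nn) (le_trans hray hQ)
  have hDpos : (0:ℝ) < (G.diam : ℝ) := by
    exact_mod_cast Nat.pos_of_ne_zero hD0
  rw [le_div_iff₀ (by positivity : (0:ℝ) < (G.diam : ℝ)^2)]
  nlinarith [hchain]
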